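/- For two vectors x, y ∈ ℝ^N that are not multiples of the all-ones vector 1, the Pearson correlation coefficient between x and y equals cos of the correlation distance, i.e., Pearson(x,y) = (cos d_a(x,y) − cos ℓ(x) cos ℓ(y)) / (sin ℓ(x) sin ℓ(y)), where ℓ(z) = d_a(z, −1). -/

import Mathlib

open Real BigOperators Filter

noncomputable section

/-- Index type for node pairs i < j of [n]. -/
abbrev PairIdx (n : ℕ) := {p : Fin n × Fin n // p.1 < p.2}

/-- Inner product on ℝ^N indexed by node pairs. -/
def inn {n : ℕ} (x y : PairIdx n → ℝ) : ℝ := ∑ p : PairIdx n, x p * y p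

/-- Euclidean norm. -/
def nrm {n : ℕ} (x : PairIdx n → ℝ) : ℝ := Real.sqrt (inn x x)

/-- Angular distance d_a(x,y) = arccos(⟨x,y⟩/(‖x‖‖y‖)). -/
def angDist {n : ℕ} (x y : PairIdx n → ℝ) : ℝ :=
  Real.arccos (inn x y / (nrm x * nrm y))

/-- The all-ones vector. -/
def allOnes (n : ℕ) : PairIdx n → ℝ := fun _ => 1

/-- Latitude ℓ(x) = d_a(x, -1). -/
def lat {n : ℕ} (x : PairIdx n → ℝ) : ℝ := angDist x (fun _ => -1)

/-- Clustering vector of a clustering given by a label function. -/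
def bvec {n : ℕ} {L : Type*} [DecidableEq L] (c : Fin n → L) : PairIdx n → ℝ :=
  fun p => if c p.1.1 = c p.1.2 then 1 else -1

/-- Intra-cluster pairs of a clustering. -/
def intraP {n : ℕ} {L : Type*} [DecidableEq L] (c : Fin n → L) : Finset (PairIdx n) :=
  Finset.univ.filter (fun p => c p.1.1 = c p.1.2)

/-- Inter-cluster pairs of a clustering. -/
def interP {n : ℕ} {L : Type*} [DecidableEq L] (c : Fin n → L) : Finset (PairIdx n) :=
  Finset.univ.filter (fun p => c p.1.1 ≠ c p.1.2)

/-- Pearson correlation between two vectors. -/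
def pearson {n : ℕ} (x y : PairIdx n → ℝ) : ℝ :=
  inn (fun p => x p - inn x (allOnes n) / (n.choose 2 : ℝ))
      (fun p => y p - inn y (allOnes n) / (n.choose 2 : ℝ)) /
  (nrm (fun p => x p - inn x (allOnes n) / (n.choose 2 : ℝ)) *
   nrm (fun p => y p - inn y (allOnes n) / (n.choose 2 : ℝ)))

section Stmt3Aux

def toE {n : ℕ} (x : PairIdx n → ℝ) : EuclideanSpace ℝ (PairIdx n) :=
  (WithLp.equiv 2 _).symm x

lemma nrm_def {n : ℕ} (x : PairIdx n → ℝ) : nrm x = Real.sqrt (inn x x) := rfl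

lemma inn_eq_inner {n : ℕ} (x y : PairIdx n → ℝ) :
    inn x y = inner (𝕜 := ℝ) (toE x) (toE y) := by
  simp [inn, toE, PiLp.inner_apply, RCLike.inner_apply]
  exact Finset.sum_congr rfl fun p _ => mul_comm _ _

lemma nrm_eq_norm {n : ℕ} (x : PairIdx n → ℝ) : nrm x = ‖toE x‖ := by
  rw [nrm_def, inn_eq_inner, real_inner_self_eq_norm_sq, Real.sqrt_sq (norm_nonneg _)]

lemma toE_ne_zero {n : ℕ} {x : PairIdx n → ℝ} (hx : ∀ c : ℝ, x ≠ fun _ => c) :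
    toE x ≠ 0 := by
  intro h
  exact hx 0 (funext fun p => congrArg (fun v : EuclideanSpace ℝ (PairIdx n) => v p) h)

lemma card_pairIdx (n : ℕ) : Fintype.card (PairIdx n) = n.choose 2 := by
  rw [Fintype.card_subtype]
  have h1 : (Finset.univ.filter fun p : Fin n × Fin n => p.1 < p.2).card
      = ∑ b : Fin n, (b : ℕ) := by
    rw [Finset.card_filter, ← Finset.univ_product_univ, Finset.sum_product_right]
    refine Finset.sum_congr rfl fun b _ => ?_
    have h2 : ∑ a : Fin n, (if (a, b).1 < (a, b).2 then 1 else 0)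
        = (Finset.univ.filter fun a : Fin n => a < b).card := by
      rw [Finset.card_filter]
    have h3 : (Finset.univ.filter fun a : Fin n => a < b) = Finset.Iio b := by
      ext a; simp
    rw [h2, h3, Fin.card_Iio]
  rw [h1, Nat.choose_two_right, ← Finset.sum_range_id]
  exact Fin.sum_univ_eq_sum_range (fun i => i) n

lemma inn_center {n : ℕ} (a b : PairIdx n → ℝ) (ca cb : ℝ) :
    inn (fun p => a p - ca) (fun p => b p - cb)
      = inn a b - cb * inn a (allOnes n) - ca * inn b (allOnes n)
        + ca * cb * (Fintype.card (PairIdx n) : ℝ) := by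
  simp only [inn, allOnes, mul_one]
  rw [Finset.sum_congr rfl (fun p _ => show (a p - ca) * (b p - cb)
        = a p * b p - cb * (a p) - ca * (b p) + ca * cb by ring)]
  rw [Finset.sum_add_distrib, Finset.sum_sub_distrib, Finset.sum_sub_distrib,
      ← Finset.mul_sum, ← Finset.mul_sum, Finset.sum_const, Finset.card_univ,
      nsmul_eq_mul]
  ring

end Stmt3Aux

set_option maxHeartbeats 1600000 in
/-- for x, y not multiples of 1, the Pearson correlation equals the
hyperspherical law-of-cosines expression. -/
theorem stmt3 (n : ℕ) (x y : PairIdx n → ℝ)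
    (hx : ∀ c : ℝ, x ≠ fun _ => c) (hy : ∀ c : ℝ, y ≠ fun _ => c) :
    pearson x y =
      (Real.cos (angDist x y) - Real.cos (lat x) * Real.cos (lat y)) /
      (Real.sin (lat x) * Real.sin (lat y)) := by
  classical
  have hne : Nonempty (PairIdx n) := by
    by_contra h
    exact hx 0 (funext fun p => absurd ⟨p⟩ h)
  have hcard1 : 1 ≤ Fintype.card (PairIdx n) := Fintype.card_pos
  set N : ℝ := ((n.choose 2 : ℕ) : ℝ) with hNdef
  have hNcard : ((Fintype.card (PairIdx n) : ℕ) : ℝ) = N := by rw [hNdef, card_pairIdx]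
  have hN0 : 0 < N := by rw [← hNcard]; exact_mod_cast hcard1
  set s := inn x (allOnes n) with hsdef
  set t := inn y (allOnes n) with htdef
  -- basic positivity
  have hX0 : toE x ≠ 0 := toE_ne_zero hx
  have hY0 : toE y ≠ 0 := toE_ne_zero hy
  have hNx : 0 < nrm x := by rw [nrm_eq_norm]; exact norm_pos_iff.2 hX0
  have hNy : 0 < nrm y := by rw [nrm_eq_norm]; exact norm_pos_iff.2 hY0
  have hsqrtN : 0 < Real.sqrt N := Real.sqrt_pos.2 hN0
  -- all-ones facts
  have hO0 : toE (allOnes n) ≠ 0 := by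
    intro h
    have h1 : (1 : ℝ) = 0 := congrArg (fun v : EuclideanSpace ℝ (PairIdx n) => v hne.some) h
    norm_num at h1
  have hOO : inn (allOnes n) (allOnes n) = N := by
    simp only [inn, allOnes, mul_one, Finset.sum_const, Finset.card_univ, nsmul_eq_mul,
      mul_one, hNcard]
  have hnrmO : nrm (allOnes n) = Real.sqrt N := by rw [nrm_def, hOO]
  -- strict Cauchy-Schwarz against the all-ones vector
  have hCS : ∀ z : PairIdx n → ℝ, (∀ c : ℝ, z ≠ fun _ => c) →
      |inn z (allOnes n)| < nrm z * Real.sqrt N := by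
    intro z hz
    have hZ0 : toE z ≠ 0 := toE_ne_zero hz
    rw [← hnrmO, nrm_eq_norm, nrm_eq_norm, inn_eq_inner]
    rcases lt_or_eq_of_le (abs_real_inner_le_norm (toE z) (toE (allOnes n))) with h | h
    · exact h
    · exfalso
      obtain ⟨r, hr, hrx⟩ := (norm_inner_eq_norm_iff hZ0 hO0).1
        (by rw [Real.norm_eq_abs]; exact h)
      apply hz r⁻¹
      funext p
      have h1 : (1 : ℝ) = r * z p := congrArg (fun v : EuclideanSpace ℝ (PairIdx n) => v p) hrx
      field_simp
      linear_combination -h1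
  have hCSx := hCS x hx
  have hCSy := hCS y hy
  -- cosine of the angular distance
  have hcosA : Real.cos (angDist x y) = inn x y / (nrm x * nrm y) := by
    have hle : |inn x y| ≤ nrm x * nrm y := by
      rw [inn_eq_inner, nrm_eq_norm, nrm_eq_norm]
      exact abs_real_inner_le_norm _ _
    have h1 : |inn x y / (nrm x * nrm y)| ≤ 1 := by
      rw [abs_div, abs_of_pos (mul_pos hNx hNy)]
      exact div_le_one_of_le₀ hle (le_of_lt (mul_pos hNx hNy))
    exact Real.cos_arccos (abs_le.1 h1).1 (abs_le.1 h1).2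
  -- latitude computations
  have hxm : inn x (fun _ => (-1 : ℝ)) = -s := by
    rw [hsdef]
    simp [inn, allOnes, ← Finset.sum_neg_distrib]
  have hym : inn y (fun _ => (-1 : ℝ)) = -t := by
    rw [htdef]
    simp [inn, allOnes, ← Finset.sum_neg_distrib]
  have hnm : nrm (fun _ => (-1 : ℝ) : PairIdx n → ℝ) = Real.sqrt N := by
    have h1 : inn (fun _ => (-1 : ℝ) : PairIdx n → ℝ) (fun _ => (-1 : ℝ)) = N := by
      simp only [inn, neg_mul_neg, one_mul, Finset.sum_const, Finset.card_univ,
        nsmul_eq_mul, mul_one, hNcard]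
    rw [nrm_def, h1]
  have hqx : |s / (nrm x * Real.sqrt N)| ≤ 1 := by
    rw [abs_div, abs_of_pos (mul_pos hNx hsqrtN)]
    exact le_of_lt ((div_lt_one (mul_pos hNx hsqrtN)).2 hCSx)
  have hqy : |t / (nrm y * Real.sqrt N)| ≤ 1 := by
    rw [abs_div, abs_of_pos (mul_pos hNy hsqrtN)]
    exact le_of_lt ((div_lt_one (mul_pos hNy hsqrtN)).2 hCSy)
  have hclx : Real.cos (lat x) = -(s / (nrm x * Real.sqrt N)) := by
    rw [lat, angDist, hxm, hnm, neg_div]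
    exact Real.cos_arccos (neg_le_neg (abs_le.1 hqx).2) (neg_le.2 (abs_le.1 hqx).1)
  have hcly : Real.cos (lat y) = -(t / (nrm y * Real.sqrt N)) := by
    rw [lat, angDist, hym, hnm, neg_div]
    exact Real.cos_arccos (neg_le_neg (abs_le.1 hqy).2) (neg_le.2 (abs_le.1 hqy).1)
  have hslx : Real.sin (lat x) = Real.sqrt (1 - (s / (nrm x * Real.sqrt N)) ^ 2) := by
    rw [lat, angDist, hxm, hnm, neg_div, Real.sin_arccos, neg_sq]
  have hsly : Real.sin (lat y) = Real.sqrt (1 - (t / (nrm y * Real.sqrt N)) ^ 2) := by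
    rw [lat, angDist, hym, hnm, neg_div, Real.sin_arccos, neg_sq]
  -- centered vectors
  set u : PairIdx n → ℝ := fun p => x p - s / N with hudef
  set v : PairIdx n → ℝ := fun p => y p - t / N with hvdef
  have hpearson : pearson x y = inn u v / (nrm u * nrm v) := by
    simp only [hudef, hvdef, hsdef, htdef, hNdef]
    rfl
  have hxx : inn x x = nrm x ^ 2 := by
    rw [nrm_eq_norm, inn_eq_inner, real_inner_self_eq_norm_sq]
  have hyy : inn y y = nrm y ^ 2 := by
    rw [nrm_eq_norm, inn_eq_inner, real_inner_self_eq_norm_sq]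
  have hinnuv : inn u v = inn x y - s * t / N := by
    rw [hudef, hvdef, inn_center x y (s / N) (t / N), ← hsdef, ← htdef, hNcard]
    field_simp
    ring
  have hinnuu : inn u u = nrm x ^ 2 - s ^ 2 / N := by
    rw [hudef, inn_center x x (s / N) (s / N), ← hsdef, hNcard, hxx]
    field_simp
    ring
  have hinnvv : inn v v = nrm y ^ 2 - t ^ 2 / N := by
    rw [hvdef, inn_center y y (t / N) (t / N), ← htdef, hNcard, hyy]
    field_simp
    ring
  -- centered vectors are nonzero
  have hUc : ∀ c : ℝ, u ≠ fun _ => c := by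
    intro c hc
    apply hx (c + s / N)
    funext p
    have h2 : x p - s / N = c := by simpa [hudef] using congrFun hc p
    linarith
  have hVc : ∀ c : ℝ, v ≠ fun _ => c := by
    intro c hc
    apply hy (c + t / N)
    funext p
    have h2 : y p - t / N = c := by simpa [hvdef] using congrFun hc p
    linarith
  have hNu : 0 < nrm u := by
    rw [nrm_eq_norm]; exact norm_pos_iff.2 (toE_ne_zero hUc)
  have hNv : 0 < nrm v := by
    rw [nrm_eq_norm]; exact norm_pos_iff.2 (toE_ne_zero hVc)
  -- key: nrm u = nrm x * sin (lat x)
  have hkx : nrm u = nrm x * Real.sin (lat x) := by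
    have h2 : (s / (nrm x * Real.sqrt N)) ^ 2 = s ^ 2 / (nrm x ^ 2 * N) := by
      rw [div_pow, mul_pow, Real.sq_sqrt hN0.le]
    have h1 : (nrm x * Real.sin (lat x)) ^ 2 = inn u u := by
      rw [hslx, mul_pow, Real.sq_sqrt (by nlinarith [abs_le.1 hqx] :
        (0:ℝ) ≤ 1 - (s / (nrm x * Real.sqrt N)) ^ 2), hinnuu, h2]
      field_simp
    have hsin0 : 0 ≤ Real.sin (lat x) := by rw [hslx]; exact Real.sqrt_nonneg _
    calc nrm u = Real.sqrt ((nrm x * Real.sin (lat x)) ^ 2) := by rw [h1, nrm_def]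
      _ = nrm x * Real.sin (lat x) := Real.sqrt_sq (mul_nonneg hNx.le hsin0)
  have hky : nrm v = nrm y * Real.sin (lat y) := by
    have h2 : (t / (nrm y * Real.sqrt N)) ^ 2 = t ^ 2 / (nrm y ^ 2 * N) := by
      rw [div_pow, mul_pow, Real.sq_sqrt hN0.le]
    have h1 : (nrm y * Real.sin (lat y)) ^ 2 = inn v v := by
      rw [hsly, mul_pow, Real.sq_sqrt (by nlinarith [abs_le.1 hqy] :
        (0:ℝ) ≤ 1 - (t / (nrm y * Real.sqrt N)) ^ 2), hinnvv, h2]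
      field_simp
    have hsin0 : 0 ≤ Real.sin (lat y) := by rw [hsly]; exact Real.sqrt_nonneg _
    calc nrm v = Real.sqrt ((nrm y * Real.sin (lat y)) ^ 2) := by rw [h1, nrm_def]
      _ = nrm y * Real.sin (lat y) := Real.sqrt_sq (mul_nonneg hNy.le hsin0)
  have hsinx : Real.sin (lat x) = nrm u / nrm x := by
    rw [hkx]; field_simp
  have hsiny : Real.sin (lat y) = nrm v / nrm y := by
    rw [hky]; field_simp
  -- product of cosines of latitudes
  have hcc : Real.cos (lat x) * Real.cos (lat y) = s * t / (nrm x * nrm y * N) := by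
    rw [hclx, hcly, neg_mul_neg, div_mul_div_comm]
    congr 1
    rw [show nrm x * Real.sqrt N * (nrm y * Real.sqrt N)
        = nrm x * nrm y * (Real.sqrt N * Real.sqrt N) by ring,
      Real.mul_self_sqrt hN0.le]
  -- final computation
  rw [hpearson, hinnuv, hcosA, hcc, hsinx, hsiny]
  rw [div_mul_div_comm]
  field_simp
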